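/- Let A be an abelian group and suppose there exists a divisible subgroup D of A such that the quotient A/D has finite exponent. Then the abelian group Ext¹_ℤ(ℚ, A) has finite exponent. -/

import Mathlib

open CategoryTheory Limits

lemma extObjAdditive {R : Type} [Ring R] {C : Type 1} [Category C] [Abelian C] [Linear R C]
    [EnoughProjectives C] (n : ℕ) (X : Cᵒᵖ) : ((Ext R C n).obj X).Additive := by
  constructor
  intro Y Z f g
  show ((NatTrans.leftDerived ((linearYoneda R C).map (f+g)).rightOp n).app X.unop).unop =
    ((NatTrans.leftDerived ((linearYoneda R C).map f).rightOp n).app X.unop).unop +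
    ((NatTrans.leftDerived ((linearYoneda R C).map g).rightOp n).app X.unop).unop
  have h1 : (linearYoneda R C).map (f + g) =
      (linearYoneda R C).map f + (linearYoneda R C).map g := by
    ext W x
    · exact Preadditive.comp_add _ _ _ (x : W.unop ⟶ Y) f g
  have h2 : ∀ {F G : Cᵒᵖ ⥤ ModuleCat R} (α β : F ⟶ G),
      NatTrans.rightOp (α + β) = NatTrans.rightOp α + NatTrans.rightOp β := by
    intro F G α β
    ext W
    rfl
  have h3 : ∀ {F G : C ⥤ (ModuleCat R)ᵒᵖ} [F.Additive] [G.Additive] (α β : F ⟶ G)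
      (K : HomologicalComplex C (ComplexShape.down ℕ)),
      (NatTrans.mapHomologicalComplex (α + β) (ComplexShape.down ℕ)).app K =
        (NatTrans.mapHomologicalComplex α _).app K + (NatTrans.mapHomologicalComplex β _).app K := by
    intro F G _ _ α β K
    ext i
    rfl
  have h4 : ∀ {F G : C ⥤ (ModuleCat R)ᵒᵖ} [F.Additive] [G.Additive] (α β : F ⟶ G),
      NatTrans.mapHomotopyCategory (α + β) (ComplexShape.down ℕ) =
        NatTrans.mapHomotopyCategory α _ + NatTrans.mapHomotopyCategory β _ := by
    intro F G _ _ α β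
    ext K
    rw [NatTrans.app_add]
    show (HomotopyCategory.quotient _ _).map ((NatTrans.mapHomologicalComplex (α + β) _).app K.as) =
      (HomotopyCategory.quotient _ _).map ((NatTrans.mapHomologicalComplex α _).app K.as) +
      (HomotopyCategory.quotient _ _).map ((NatTrans.mapHomologicalComplex β _).app K.as)
    rw [h3, Functor.map_add]
  rw [← unop_add, h1, h2]
  show Quiver.Hom.unop ((HomotopyCategory.homologyFunctor (ModuleCat R)ᵒᵖ (ComplexShape.down ℕ) n).map
    ((NatTrans.mapHomotopyCategory (NatTrans.rightOp ((linearYoneda R C).map f) +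
      NatTrans.rightOp ((linearYoneda R C).map g)) (ComplexShape.down ℕ)).app
    ((projectiveResolutions C).obj X.unop))) = _
  rw [h4, NatTrans.app_add, Functor.map_add]
  rfl

lemma aux_desc {C : Type 1} [Category C] [Abelian C] {S : ShortComplex C} (hS : S.Exact)
    (J : C) [Injective J] (f : S.X₂ ⟶ J) (hf : S.f ≫ f = 0) :
    ∃ g : S.X₃ ⟶ J, S.g ≫ g = f := by
  have h2 := hS.op.map (preadditiveYonedaObj J)
  rw [ShortComplex.moduleCat_exact_iff] at h2
  obtain ⟨g, hg⟩ := h2 f (by exact hf)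
  exact ⟨g, by exact hg⟩

lemma isZero_Ext_one_of_injective {C : Type 1} [Category C] [Abelian C] [Linear ℤ C]
    [EnoughProjectives C] (X J : C) [Injective J] :
    IsZero (((Ext ℤ C 1).obj (Opposite.op X)).obj J) := by
  obtain ⟨P⟩ : Nonempty (ProjectiveResolution X) := HasProjectiveResolution.out
  refine IsZero.of_iso ?_ (P.isoExt 1 J)
  rw [← HomologicalComplex.exactAt_iff_isZero_homology,
      HomologicalComplex.exactAt_iff' _ 0 1 2 (by simp) (by simp),
      ShortComplex.moduleCat_exact_iff]
  intro x hx
  have hexact : (P.complex.sc' 2 1 0).Exact := by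
    rw [← HomologicalComplex.exactAt_iff' _ 2 1 0 (by simp) (by simp)]
    exact P.complex_exactAt_succ 0
  obtain ⟨g, hg⟩ := aux_desc hexact J x (by exact hx)
  exact ⟨g, by exact hg⟩

/-- If the abelian group `A` has a divisible subgroup `D` with `A/D` of finite exponent,
then `Ext¹_ℤ(ℚ, A)` has finite exponent. -/
theorem ext_rat_finiteExponent
    (A : Type) [AddCommGroup A]
    (hA : ∃ D : AddSubgroup A, (∀ x ∈ D, ∀ n : ℕ, 1 ≤ n → ∃ y ∈ D, n • y = x) ∧
      ∃ m : ℕ, 1 ≤ m ∧ ∀ x : A, m • x ∈ D) :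
    ∃ e : ℕ, 1 ≤ e ∧
      ∀ x : ((Ext ℤ (ModuleCat ℤ) 1).obj (Opposite.op (ModuleCat.of ℤ ℚ))).obj
        (ModuleCat.of ℤ A), e • x = 0 := by
  classical
  obtain ⟨D, hdiv, m, hm1, hmD⟩ := hA
  haveI : DivisibleBy ↥D ℤ :=
    { div := fun x n => if h : n = 0 then 0 else
        Int.sign n • (⟨(hdiv x.1 x.2 n.natAbs (by omega)).choose,
          (hdiv x.1 x.2 n.natAbs (by omega)).choose_spec.1⟩ : D)
      div_zero := fun x => by simp
      div_cancel := fun {n} x hn => by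
        rw [dif_neg hn, smul_smul, Int.mul_sign_self]
        have hspec := (hdiv x.1 x.2 n.natAbs (by omega)).choose_spec.2
        ext
        push_cast [natCast_zsmul]
        rwa [← Int.natCast_natAbs, natCast_zsmul] }
  haveI : Injective (ModuleCat.of ℤ ↥D) :=
    Module.injective_object_of_injective_module
      (inj := (Module.Baer.of_divisible ↥D).injective)
  refine ⟨m, hm1, fun x => ?_⟩
  let F := (Ext ℤ (ModuleCat ℤ) 1).obj (Opposite.op (ModuleCat.of ℤ ℚ))
  haveI : F.Additive := extObjAdditive 1 _
  let φ : ModuleCat.of ℤ A ⟶ ModuleCat.of ℤ ↥D :=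
    ModuleCat.ofHom
      { toFun := fun a => ⟨m • a, hmD a⟩
        map_add' := fun a b => by ext; simp [smul_add]
        map_smul' := fun r a => by ext; exact smul_comm m r a }
  let ι : ModuleCat.of ℤ ↥D ⟶ ModuleCat.of ℤ A := ModuleCat.ofHom D.subtype.toIntLinearMap
  have hcomp : φ ≫ ι = (m : ℤ) • 𝟙 (ModuleCat.of ℤ A) := by
    ext a
    change m • a = (m : ℤ) • a
    exact (natCast_zsmul a m).symm
  have h0 : F.map φ x = 0 := by
    have hz := isZero_Ext_one_of_injective (C := ModuleCat ℤ)
      (ModuleCat.of ℤ ℚ) (ModuleCat.of ℤ ↥D)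
    have hid : 𝟙 (F.obj (ModuleCat.of ℤ ↥D)) = 0 := hz.eq_of_src _ _
    calc F.map φ x = (𝟙 (F.obj (ModuleCat.of ℤ ↥D))) (F.map φ x) := rfl
    _ = (0 : F.obj (ModuleCat.of ℤ ↥D) ⟶ F.obj (ModuleCat.of ℤ ↥D)) (F.map φ x) := by rw [hid]
    _ = 0 := rfl
  have hmap : F.map (φ ≫ ι) x = 0 := by
    rw [F.map_comp]
    change (F.map ι) ((F.map φ) x) = 0
    rw [h0, map_zero]
  rw [hcomp, Functor.map_zsmul, CategoryTheory.Functor.map_id] at hmap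
  have h' : (m : ℤ) • x = 0 := hmap
  rwa [natCast_zsmul] at h'
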